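/- Let A be an antimatroid on a finite set Q and let (B, q) be a prime implicate of A (with q ∉ B). Then B ∪ {q} is a circuit of A with root q: B ∪ {q} is not free, but every proper subset of B ∪ {q} is free. -/
import Mathlib


variable {α : Type*} [DecidableEq α] [Fintype α]

/-- A family of subsets is union-closed. -/
def UnionClosed (K : Set (Finset α)) : Prop :=
  ∀ X ∈ K, ∀ Y ∈ K, X ∪ Y ∈ K

/-- There is a tight path in `K` from `S` to `T`: a chain of members of `K`
each obtained from the previous by adding exactly one element. -/
def TightPath (K : Set (Finset α)) (S T : Finset α) : Prop :=
  ∃ (k : ℕ) (Y : ℕ → Finset α), Y 0 = S ∧ Y k = T ∧ (∀ i ≤ k, Y i ∈ K) ∧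
    ∀ i < k, Y i ⊆ Y (i + 1) ∧ (Y (i + 1) \ Y i).card = 1

/-- The family of members of `K` reachable from `∅` by a tight path in `K`. -/
def checkFam (K : Set (Finset α)) : Set (Finset α) :=
  {X | X ∈ K ∧ TightPath K ∅ X}

/-- Accessibility: every nonempty member can lose some element and stay in the family. -/
def Accessible (K : Set (Finset α)) : Prop :=
  ∀ X ∈ K, X ≠ ∅ → ∃ x ∈ X, X.erase x ∈ K

/-- An antimatroid: contains `∅`, union-closed, and accessible. -/
def IsAntimatroid (K : Set (Finset α)) : Prop :=
  ∅ ∈ K ∧ UnionClosed K ∧ Accessible K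

/-- A Horn rule `(A, q)` accepts `X` if `q ∈ X` implies `X ∩ A ≠ ∅`. -/
def Accepts (r : Finset α × α) (X : Finset α) : Prop :=
  r.2 ∈ X → (X ∩ r.1).Nonempty

/-- The union-closed family determined by a set of Horn rules. -/
def KFam (R : Set (Finset α × α)) : Set (Finset α) :=
  {X | ∀ r ∈ R, Accepts r X}

/-- The maximal antimatroid contained in `KFam R`. -/
def AFam (R : Set (Finset α × α)) : Set (Finset α) :=
  checkFam (KFam R)

/-- A rule is an implicate of a family if it accepts every member. -/
def Implicate (K : Set (Finset α)) (r : Finset α × α) : Prop :=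
  ∀ X ∈ K, Accepts r X

/-- `X` is free in the family `A` if every subset of `X` is a trace of a member of `A`. -/
def FreeIn (A : Set (Finset α)) (X : Finset α) : Prop :=
  ∀ S ⊆ X, ∃ K ∈ A, X ∩ K = S

/-- A circuit: not free, but every proper subset is free. -/
def IsCircuit (A : Set (Finset α)) (C : Finset α) : Prop :=
  ¬ FreeIn A C ∧ ∀ C' ⊂ C, FreeIn A C'

omit [Fintype α] in
lemma biUnion_mem_of_unionClosed {A : Set (Finset α)} (h0 : ∅ ∈ A) (hu : UnionClosed A)
    (S : Finset α) (f : α → Finset α) (hf : ∀ a ∈ S, f a ∈ A) :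
    S.biUnion f ∈ A := by
  induction S using Finset.induction_on with
  | empty => simpa using h0
  | @insert b T hb ih =>
    rw [Finset.biUnion_insert]
    exact hu _ (hf b (by simp)) _ (ih fun a ha => hf a (by simp [ha]))

theorem stmt12 (A : Set (Finset α)) (hA : IsAntimatroid A)
    (B : Finset α) (q : α) (hq : q ∉ B)
    (himp : Implicate A (B, q))
    (hprime : ∀ a ∈ B, ¬ Implicate A (B.erase a, q)) :
    IsCircuit A (insert q B) := by
  obtain ⟨h0, hu, hacc⟩ := hA
  -- key lemma
  have key : ∀ a ∈ B, ∃ X, (X ∈ A ∧ q ∈ X ∧ X ∩ B = {a}) ∧ X.erase q ∈ A := by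
    intro a ha
    have hne : ∃ X, (X ∈ A ∧ q ∈ X ∧ X ∩ B = {a}) := by
      have := hprime a ha
      simp only [Implicate, Accepts, not_forall] at this
      obtain ⟨X, hXA, hX⟩ := this
      obtain ⟨hqX, hXea⟩ := hX
      refine ⟨X, hXA, hqX, ?_⟩
      have hsub : X ∩ B ⊆ {a} := by
        intro y hy
        simp only [Finset.mem_inter] at hy
        simp only [Finset.mem_singleton]
        by_contra hya
        exact hXea ⟨y, by simp [Finset.mem_inter, Finset.mem_erase, hy.1, hy.2, hya]⟩
      rcases Finset.subset_singleton_iff.mp hsub with h | h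
      · exact absurd h (Finset.nonempty_iff_ne_empty.mp (himp X hXA hqX))
      · exact h
    -- minimal cardinality witness
    set P : Finset α → Prop := fun X => X ∈ A ∧ q ∈ X ∧ X ∩ B = {a} with hP
    have hns : {n | ∃ X, P X ∧ X.card = n}.Nonempty := ⟨hne.choose.card, hne.choose, hne.choose_spec, rfl⟩
    obtain ⟨X, hPX, hcard⟩ := Nat.sInf_mem hns
    obtain ⟨hXA, hqX, hXB⟩ := hPX
    have haX : a ∈ X := by
      have : a ∈ X ∩ B := by rw [hXB]; simp
      exact (Finset.mem_inter.mp this).1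
    obtain ⟨x, hxX, hxe⟩ := hacc X hXA (Finset.ne_empty_of_mem hqX)
    by_cases hxq : x = q
    · subst hxq; exact ⟨X, ⟨hXA, hqX, hXB⟩, hxe⟩
    · exfalso
      by_cases hxa : x = a
      · subst hxa
        have hqe : q ∈ X.erase x := Finset.mem_erase.mpr ⟨fun h => hxq h.symm, hqX⟩
        obtain ⟨y, hy⟩ := himp _ hxe hqe
        simp only [Finset.mem_inter, Finset.mem_erase] at hy
        have : y ∈ X ∩ B := Finset.mem_inter.mpr ⟨hy.1.2, hy.2⟩
        rw [hXB] at this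
        exact hy.1.1 (Finset.mem_singleton.mp this)
      · -- x ∉ {q, a}: smaller witness
        have hqe : q ∈ X.erase x := Finset.mem_erase.mpr ⟨fun h => hxq h.symm, hqX⟩
        have hXB' : X.erase x ∩ B = {a} := by
          apply Finset.Subset.antisymm
          · intro y hy
            simp only [Finset.mem_inter, Finset.mem_erase] at hy
            rw [← hXB]; exact Finset.mem_inter.mpr ⟨hy.1.2, hy.2⟩
          · intro y hy
            rw [Finset.mem_singleton] at hy; subst hy
            exact Finset.mem_inter.mpr ⟨Finset.mem_erase.mpr ⟨fun h => hxa h.symm, haX⟩, ha⟩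
        have hlt : (X.erase x).card < sInf {n | ∃ X, P X ∧ X.card = n} := by
          rw [← hcard]
          exact Finset.card_erase_lt_of_mem hxX
        have hmem : (X.erase x).card ∈ {n | ∃ X, P X ∧ X.card = n} :=
          ⟨X.erase x, ⟨hxe, hqe, hXB'⟩, rfl⟩
        exact absurd (Nat.sInf_le hmem) (not_le.mpr hlt)
  choose! X hXmem hXe using key
  have hXA : ∀ a ∈ B, X a ∈ A := fun a ha => (hXmem a ha).1
  have hXq : ∀ a ∈ B, q ∈ X a := fun a ha => (hXmem a ha).2.1
  have hXB : ∀ a ∈ B, X a ∩ B = {a} := fun a ha => (hXmem a ha).2.2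
  constructor
  · -- not free
    intro hfree
    obtain ⟨K, hK, hKeq⟩ := hfree {q} (by simp)
    have hqK : q ∈ K := by
      have : q ∈ insert q B ∩ K := by rw [hKeq]; simp
      exact (Finset.mem_inter.mp this).2
    obtain ⟨b, hb⟩ := himp K hK hqK
    simp only [Finset.mem_inter] at hb
    have : b ∈ insert q B ∩ K := Finset.mem_inter.mpr ⟨Finset.mem_insert_of_mem hb.2, hb.1⟩
    rw [hKeq, Finset.mem_singleton] at this
    subst this
    exact hq hb.2
  · intro C' hC' S hS
    have hC'sub : C' ⊆ insert q B := hC'.subset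
    by_cases hqS : q ∈ S
    · -- q ∈ S, so q ∈ C', and there's b ∈ B \ C'
      have hqC' : q ∈ C' := hS hqS
      obtain ⟨y, hyQ, hyC'⟩ := Finset.exists_of_ssubset hC'
      have hbB : y ∈ B := by
        rcases Finset.mem_insert.mp hyQ with h | h
        · exact absurd (h ▸ hqC') hyC'
        · exact h
      refine ⟨X y ∪ (S.erase q).biUnion (fun a => (X a).erase q), ?_, ?_⟩
      · refine hu _ (hXA y hbB) _ (biUnion_mem_of_unionClosed h0 hu _ _ ?_)
        intro a haS
        have haB : a ∈ B := by
          have := hS (Finset.mem_of_mem_erase haS)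
          rcases Finset.mem_insert.mp (hC'sub this) with h | h
          · exact absurd h (Finset.ne_of_mem_erase haS)
          · exact h
        exact hXe a haB
      · ext z
        simp only [Finset.mem_inter, Finset.mem_union, Finset.mem_biUnion, Finset.mem_erase]
        constructor
        · rintro ⟨hzC, hzK⟩
          rcases hzK with hzX | ⟨a, haS, hza, hzXa⟩
          · -- z ∈ X y
            rcases Finset.mem_insert.mp (hC'sub hzC) with h | h
            · exact h ▸ hqS
            · have : z ∈ X y ∩ B := Finset.mem_inter.mpr ⟨hzX, h⟩
              rw [hXB y hbB, Finset.mem_singleton] at this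
              exact absurd (this ▸ hzC) hyC'
          · -- z ∈ (X a).erase q with a ∈ S.erase q
            have haB : a ∈ B := by
              have := hS haS.2
              rcases Finset.mem_insert.mp (hC'sub this) with h | h
              · exact absurd h haS.1
              · exact h
            have hzB : z ∈ B := by
              rcases Finset.mem_insert.mp (hC'sub hzC) with h | h
              · exact absurd h hza
              · exact h
            have : z ∈ X a ∩ B := Finset.mem_inter.mpr ⟨hzXa, hzB⟩
            rw [hXB a haB, Finset.mem_singleton] at this
            exact this ▸ haS.2
        · intro hzS
          refine ⟨hS hzS, ?_⟩
          by_cases hzq : z = q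
          · exact Or.inl (hzq ▸ hXq y hbB)
          · have hzB : z ∈ B := by
              rcases Finset.mem_insert.mp (hC'sub (hS hzS)) with h | h
              · exact absurd h hzq
              · exact h
            refine Or.inr ⟨z, ⟨hzq, hzS⟩, hzq, ?_⟩
            have : z ∈ X z ∩ B := by rw [hXB z hzB]; simp
            exact (Finset.mem_inter.mp this).1
    · -- q ∉ S
      have hSB : ∀ a ∈ S, a ∈ B := by
        intro a haS
        rcases Finset.mem_insert.mp (hC'sub (hS haS)) with h | h
        · exact absurd (h ▸ haS) hqS
        · exact h
      refine ⟨S.biUnion (fun a => (X a).erase q), biUnion_mem_of_unionClosed h0 hu _ _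
        (fun a haS => hXe a (hSB a haS)), ?_⟩
      ext z
      simp only [Finset.mem_inter, Finset.mem_biUnion, Finset.mem_erase]
      constructor
      · rintro ⟨hzC, a, haS, hza, hzXa⟩
        have hzB : z ∈ B := by
          rcases Finset.mem_insert.mp (hC'sub hzC) with h | h
          · exact absurd h hza
          · exact h
        have : z ∈ X a ∩ B := Finset.mem_inter.mpr ⟨hzXa, hzB⟩
        rw [hXB a (hSB a haS), Finset.mem_singleton] at this
        exact this ▸ haS
      · intro hzS
        have hzB := hSB z hzS
        have hzq : z ≠ q := fun h => hq (h ▸ hzB)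
        refine ⟨hS hzS, z, hzS, hzq, ?_⟩
        have : z ∈ X z ∩ B := by rw [hXB z hzB]; simp
        exact (Finset.mem_inter.mp this).1
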